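/- Let Γ = {(i₁,j₁),…,(i_k,j_k)} be an antichain in the poset Δ⁺ of positive roots of type A_n, with i₁ < ⋯ < i_k and j₁ < ⋯ < j_k. Then the dual set Γ*, whose first-coordinate sequence is [n] \ {j₁,…,j_k} and whose second-coordinate sequence is [n] \ {i₁,…,i_k}, both listed in increasing order, is again an antichain in Δ⁺, and #Γ + #Γ* = n. Moreover, if Γ consists only of simple roots, Γ ⊆ Π = {α₁,…,α_n}, then Γ* = Π \ Γ. -/

import Mathlib

open Finset

/-- The root order on pairs: `(i,j) ≼ (i',j')` iff `i' ≤ i` and `j ≤ j'`. -/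
def rle (p q : ℕ × ℕ) : Prop := q.1 ≤ p.1 ∧ p.2 ≤ q.2

instance : DecidableRel rle := fun p q =>
  inferInstanceAs (Decidable (q.1 ≤ p.1 ∧ p.2 ≤ q.2))

/-- The positive roots of type `A_n`, modelled as pairs `(i,j)` with `1 ≤ i ≤ j ≤ n`. -/
def roots (n : ℕ) : Finset (ℕ × ℕ) :=
  ((Finset.Icc 1 n) ×ˢ (Finset.Icc 1 n)).filter (fun p => p.1 ≤ p.2)

/-- `Γ` is an antichain in `Δ⁺(A_n)`: a set of pairwise incomparable positive roots. -/
def IsAC (n : ℕ) (Γ : Finset (ℕ × ℕ)) : Prop :=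
  Γ ⊆ roots n ∧ ∀ p ∈ Γ, ∀ q ∈ Γ, rle p q → p = q

/-- The upper ideal `I(Γ) = {x ∈ Δ⁺ : ∃ γ ∈ Γ, γ ≼ x}` generated by `Γ`. -/
def upIdeal (n : ℕ) (Γ : Finset (ℕ × ℕ)) : Finset (ℕ × ℕ) :=
  (roots n).filter (fun x => ∃ γ ∈ Γ, rle γ x)

/-- The set of maximal elements of `S` with respect to the root order. -/
def maxOf (S : Finset (ℕ × ℕ)) : Finset (ℕ × ℕ) :=
  S.filter (fun x => ∀ y ∈ S, rle x y → y = x)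

/-- The set of minimal elements of `S` with respect to the root order. -/
def minOf (S : Finset (ℕ × ℕ)) : Finset (ℕ × ℕ) :=
  S.filter (fun x => ∀ y ∈ S, rle y x → y = x)

/-- The reverse operator `𝔛`, sending an antichain `Γ` to the set of maximal
elements of `Δ⁺ \ I(Γ)`. -/
def Xrev (n : ℕ) (Γ : Finset (ℕ × ℕ)) : Finset (ℕ × ℕ) :=
  maxOf (roots n \ upIdeal n Γ)

/-- `r_Γ(γ) = #(I(Γ) \ {γ})_min − #I(Γ)_min + 1`. -/
def rGam (n : ℕ) (Γ : Finset (ℕ × ℕ)) (γ : ℕ × ℕ) : ℤ :=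
  ((minOf (upIdeal n Γ \ {γ})).card : ℤ) - ((minOf (upIdeal n Γ)).card : ℤ) + 1

/-- The OY-number `𝒴(Γ) = Σ_{γ ∈ Γ} r_Γ(γ)`; in particular `𝒴(∅) = 0`. -/
def OY (n : ℕ) (Γ : Finset (ℕ × ℕ)) : ℤ := ∑ γ ∈ Γ, rGam n Γ γ

/-- The dual antichain `Γ*`: if `Γ` has first coordinates `𝐢` and second
coordinates `𝐣`, then `Γ*` pairs the elements of `[n] \ 𝐣` (listed increasingly,
as first coordinates) with the elements of `[n] \ 𝐢` (listed increasingly,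
as second coordinates). -/
def dualAC (n : ℕ) (Γ : Finset (ℕ × ℕ)) : Finset (ℕ × ℕ) :=
  let iStar := ((Finset.Icc 1 n) \ (Γ.image Prod.snd)).sort (· ≤ ·)
  let jStar := ((Finset.Icc 1 n) \ (Γ.image Prod.fst)).sort (· ≤ ·)
  (Finset.range iStar.length).image (fun t => (iStar.getD t 0, jStar.getD t 0))

/-- The set `Π = {α₁,…,α_n}` of simple roots, `α_i = (i,i)`. -/
def simples (n : ℕ) : Finset (ℕ × ℕ) := (Finset.Icc 1 n).image (fun t => (t, t))

/-- For an antichain `Γ` in `Δ⁺(A_n)`, the dual set `Γ*` is again an antichain,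
`#Γ + #Γ* = n`, and if `Γ ⊆ Π` then `Γ* = Π \ Γ`. -/

private lemma sort_getD_strictMono (S : Finset ℕ) {s t : ℕ}
    (hs : s < (S.sort (· ≤ ·)).length) (ht : t < (S.sort (· ≤ ·)).length) (hst : s < t) :
    (S.sort (· ≤ ·)).getD s 0 < (S.sort (· ≤ ·)).getD t 0 := by
  rw [List.getD_eq_getElem _ _ hs, List.getD_eq_getElem _ _ ht]
  exact (S.sortedLT_sort).strictMono_get (a := ⟨s, hs⟩) (b := ⟨t, ht⟩) hst

private lemma sort_getD_le_iff (S : Finset ℕ) (m t : ℕ)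
    (ht : t < (S.sort (· ≤ ·)).length) :
    (S.sort (· ≤ ·)).getD t 0 ≤ m ↔ t + 1 ≤ (S.filter (· ≤ m)).card := by
  rw [List.getD_eq_getElem _ _ ht]
  constructor
  · intro h
    have hnd : ((S.sort (· ≤ ·)).take (t+1)).Nodup :=
      (List.take_sublist _ _).nodup (S.sort_nodup _)
    have hlen : ((S.sort (· ≤ ·)).take (t+1)).length = t + 1 := by
      rw [List.length_take]; omega
    have hsub : ((S.sort (· ≤ ·)).take (t+1)).toFinset ⊆ S.filter (· ≤ m) := by
      intro x hx
      rw [List.mem_toFinset] at hx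
      obtain ⟨s, hs, hxs⟩ := List.mem_iff_getElem.mp hx
      rw [List.getElem_take] at hxs
      have hs' : s ≤ t := by rw [hlen] at hs; omega
      have hsA : s < (S.sort (· ≤ ·)).length := by omega
      have h4 : (S.sort (· ≤ ·))[s] ≤ (S.sort (· ≤ ·))[t] :=
        (Finset.pairwise_sort S (· ≤ ·)).rel_get_of_le (a := ⟨s, hsA⟩) (b := ⟨t, ht⟩) hs'
      rw [mem_filter]
      refine ⟨(Finset.mem_sort (α := ℕ) (· ≤ ·)).mp ?_, show x ≤ m by omega⟩
      rw [← hxs]; exact List.getElem_mem _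
    calc t + 1 = ((S.sort (· ≤ ·)).take (t+1)).toFinset.card := by
            rw [List.toFinset_card_of_nodup hnd, hlen]
      _ ≤ _ := Finset.card_le_card hsub
  · intro h
    by_contra hlt
    push_neg at hlt
    have hsub : S.filter (· ≤ m) ⊆ ((S.sort (· ≤ ·)).take t).toFinset := by
      intro x hx
      rw [mem_filter] at hx
      obtain ⟨s, hs, hxs⟩ :=
        List.mem_iff_getElem.mp ((Finset.mem_sort (α := ℕ) (· ≤ ·)).mpr hx.1)
      have hst : s < t := by
        by_contra hge
        push_neg at hge
        have h4 : (S.sort (· ≤ ·))[t] ≤ (S.sort (· ≤ ·))[s] :=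
          (Finset.pairwise_sort S (· ≤ ·)).rel_get_of_le (a := ⟨t, ht⟩) (b := ⟨s, hs⟩) hge
        have hxm : x ≤ m := hx.2
        omega
      rw [List.mem_toFinset]
      have hs2 : s < ((S.sort (· ≤ ·)).take t).length := by rw [List.length_take]; omega
      have h5 : ((S.sort (· ≤ ·)).take t)[s] = x := by rw [List.getElem_take]; exact hxs
      rw [← h5]; exact List.getElem_mem _
    have := Finset.card_le_card hsub
    have h2 := List.toFinset_card_le ((S.sort (· ≤ ·)).take t)
    have h3 : ((S.sort (· ≤ ·)).take t).length ≤ t := by rw [List.length_take]; omega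
    omega
private lemma sort_getD_le_sort_getD {S T : Finset ℕ}
    (h : ∀ m : ℕ, (T.filter (· ≤ m)).card ≤ (S.filter (· ≤ m)).card)
    {t : ℕ} (hsS : t < (S.sort (· ≤ ·)).length) (hsT : t < (T.sort (· ≤ ·)).length) :
    (S.sort (· ≤ ·)).getD t 0 ≤ (T.sort (· ≤ ·)).getD t 0 := by
  rw [sort_getD_le_iff S _ t hsS]
  exact ((sort_getD_le_iff T _ t hsT).mp le_rfl).trans (h _)

private lemma mem_sort_getD (S : Finset ℕ) {t : ℕ} (ht : t < (S.sort (· ≤ ·)).length) :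
    (S.sort (· ≤ ·)).getD t 0 ∈ S := by
  rw [List.getD_eq_getElem _ _ ht]
  exact (Finset.mem_sort (α := ℕ) (· ≤ ·)).mp (List.getElem_mem _)

theorem stmt12 (n : ℕ) (hn : 1 ≤ n) (Γ : Finset (ℕ × ℕ)) (hΓ : IsAC n Γ) :
    IsAC n (dualAC n Γ) ∧
    Γ.card + (dualAC n Γ).card = n ∧
    (Γ ⊆ simples n → dualAC n Γ = simples n \ Γ) := by
  have hroots : ∀ p ∈ Γ, 1 ≤ p.1 ∧ p.1 ≤ p.2 ∧ p.2 ≤ n := by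
    intro p hp
    have := hΓ.1 hp
    simp only [roots, Finset.mem_filter, Finset.mem_product, Finset.mem_Icc] at this
    omega
  have hfst : Set.InjOn Prod.fst (Γ : Set (ℕ × ℕ)) := by
    intro p hp q hq h
    rcases le_total p.2 q.2 with h2 | h2
    · exact hΓ.2 p hp q hq ⟨h.ge, h2⟩
    · exact (hΓ.2 q hq p hp ⟨h.le, h2⟩).symm
  have hsnd : Set.InjOn Prod.snd (Γ : Set (ℕ × ℕ)) := by
    intro p hp q hq h
    rcases le_total p.1 q.1 with h1 | h1
    · exact (hΓ.2 q hq p hp ⟨h1, h.ge⟩).symm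
    · exact hΓ.2 p hp q hq ⟨h1, h.le⟩
  have hIcard : (Γ.image Prod.fst).card = Γ.card := Finset.card_image_of_injOn hfst
  have hJcard : (Γ.image Prod.snd).card = Γ.card := Finset.card_image_of_injOn hsnd
  have hIsub : Γ.image Prod.fst ⊆ Finset.Icc 1 n := by
    intro a ha
    obtain ⟨p, hp, rfl⟩ := Finset.mem_image.mp ha
    have := hroots p hp
    simp only [Finset.mem_Icc]; omega
  have hJsub : Γ.image Prod.snd ⊆ Finset.Icc 1 n := by
    intro a ha
    obtain ⟨p, hp, rfl⟩ := Finset.mem_image.mp ha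
    have := hroots p hp
    simp only [Finset.mem_Icc]; omega
  have hIccc : (Finset.Icc 1 n).card = n := by simp
  have hkn : Γ.card ≤ n := by
    have := Finset.card_le_card hIsub
    omega
  have hAlen : ((Finset.Icc 1 n \ Γ.image Prod.snd).sort (· ≤ ·)).length = n - Γ.card := by
    rw [Finset.length_sort, Finset.card_sdiff_of_subset hJsub, hIccc, hJcard]
  have hBlen : ((Finset.Icc 1 n \ Γ.image Prod.fst).sort (· ≤ ·)).length = n - Γ.card := by
    rw [Finset.length_sort, Finset.card_sdiff_of_subset hIsub, hIccc, hIcard]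
  -- counting inequality
  have hcount : ∀ m : ℕ, (((Finset.Icc 1 n \ Γ.image Prod.fst)).filter (· ≤ m)).card ≤
      (((Finset.Icc 1 n \ Γ.image Prod.snd)).filter (· ≤ m)).card := by
    intro m
    have hsplit : ∀ X : Finset ℕ, X ⊆ Finset.Icc 1 n →
        ((Finset.Icc 1 n \ X).filter (· ≤ m)).card =
          ((Finset.Icc 1 n).filter (· ≤ m)).card - (X.filter (· ≤ m)).card := by
      intro X hX
      have heq : (Finset.Icc 1 n \ X).filter (· ≤ m) =
          (Finset.Icc 1 n).filter (· ≤ m) \ X.filter (· ≤ m) := by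
        ext a
        simp only [Finset.mem_filter, Finset.mem_sdiff]
        tauto
      rw [heq, Finset.card_sdiff_of_subset (Finset.filter_subset_filter _ hX)]
    have hJI : ((Γ.image Prod.snd).filter (· ≤ m)).card ≤
        ((Γ.image Prod.fst).filter (· ≤ m)).card := by
      have h1 : (Γ.filter (fun γ => γ.2 ≤ m)).image Prod.snd =
          (Γ.image Prod.snd).filter (· ≤ m) := by
        ext a
        simp only [Finset.mem_image, Finset.mem_filter]
        constructor
        · rintro ⟨γ, hγ, rfl⟩
          exact ⟨⟨γ, hγ.1, rfl⟩, hγ.2⟩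
        · rintro ⟨⟨γ, hγ, rfl⟩, hm⟩
          exact ⟨γ, ⟨hγ, hm⟩, rfl⟩
      have h2 : (Γ.filter (fun γ => γ.2 ≤ m)).image Prod.fst ⊆
          (Γ.image Prod.fst).filter (· ≤ m) := by
        intro a ha
        obtain ⟨γ, hγ, rfl⟩ := Finset.mem_image.mp ha
        rw [Finset.mem_filter] at hγ ⊢
        have := hroots γ hγ.1
        exact ⟨Finset.mem_image.mpr ⟨γ, hγ.1, rfl⟩, show γ.1 ≤ m by omega⟩
      calc ((Γ.image Prod.snd).filter (· ≤ m)).card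
          = (Γ.filter (fun γ => γ.2 ≤ m)).card := by
            rw [← h1]
            exact Finset.card_image_of_injOn (hsnd.mono (Finset.coe_subset.mpr (Finset.filter_subset _ _)))
        _ = ((Γ.filter (fun γ => γ.2 ≤ m)).image Prod.fst).card :=
            (Finset.card_image_of_injOn (hfst.mono (Finset.coe_subset.mpr (Finset.filter_subset _ _)))).symm
        _ ≤ _ := Finset.card_le_card h2
    rw [hsplit _ hIsub, hsplit _ hJsub]
    have := Finset.card_le_card
      (Finset.filter_subset_filter (· ≤ m) hIsub)
    omega
  have hkey : ∀ t, t < n - Γ.card →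
      ((Finset.Icc 1 n \ Γ.image Prod.snd).sort (· ≤ ·)).getD t 0 ≤
      ((Finset.Icc 1 n \ Γ.image Prod.fst).sort (· ≤ ·)).getD t 0 := by
    intro t ht
    exact sort_getD_le_sort_getD hcount (by omega) (by omega)
  have hdual : dualAC n Γ =
      (Finset.range ((Finset.Icc 1 n \ Γ.image Prod.snd).sort (· ≤ ·)).length).image
        (fun t => (((Finset.Icc 1 n \ Γ.image Prod.snd).sort (· ≤ ·)).getD t 0,
                   ((Finset.Icc 1 n \ Γ.image Prod.fst).sort (· ≤ ·)).getD t 0)) := rfl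
  have hmem : ∀ x, x ∈ dualAC n Γ ↔ ∃ t, t < n - Γ.card ∧
      x = (((Finset.Icc 1 n \ Γ.image Prod.snd).sort (· ≤ ·)).getD t 0,
           ((Finset.Icc 1 n \ Γ.image Prod.fst).sort (· ≤ ·)).getD t 0) := by
    intro x
    rw [hdual]
    simp only [Finset.mem_image, Finset.mem_range, hAlen]
    constructor
    · rintro ⟨t, ht, rfl⟩; exact ⟨t, ht, rfl⟩
    · rintro ⟨t, ht, rfl⟩; exact ⟨t, ht, rfl⟩
  have hac : IsAC n (dualAC n Γ) := by
    constructor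
    · intro x hx
      obtain ⟨t, ht, rfl⟩ := (hmem x).mp hx
      have hA := mem_sort_getD (Finset.Icc 1 n \ Γ.image Prod.snd) (t := t) (by omega)
      have hB := mem_sort_getD (Finset.Icc 1 n \ Γ.image Prod.fst) (t := t) (by omega)
      rw [Finset.mem_sdiff, Finset.mem_Icc] at hA hB
      have := hkey t ht
      simp only [roots, Finset.mem_filter, Finset.mem_product, Finset.mem_Icc]
      omega
    · intro p hp q hq hpq
      obtain ⟨t, ht, rfl⟩ := (hmem p).mp hp
      obtain ⟨s, hs, rfl⟩ := (hmem q).mp hq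
      obtain ⟨h1, h2⟩ := hpq
      simp only at h1 h2
      rcases lt_trichotomy t s with h | h | h
      · have := sort_getD_strictMono (Finset.Icc 1 n \ Γ.image Prod.snd)
          (s := t) (t := s) (by omega) (by omega) h
        omega
      · rw [h]
      · have := sort_getD_strictMono (Finset.Icc 1 n \ Γ.image Prod.fst)
          (s := s) (t := t) (by omega) (by omega) h
        omega
  refine ⟨hac, ?_, ?_⟩
  · rw [hdual]
    rw [Finset.card_image_of_injOn, Finset.card_range, hAlen]
    · omega
    · intro s hs t ht h
      simp only [Finset.coe_range, Set.mem_Iio, hAlen] at hs ht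
      have h1 := congrArg Prod.fst h
      simp only at h1
      rcases lt_trichotomy s t with hlt | hlt | hlt
      · have := sort_getD_strictMono (Finset.Icc 1 n \ Γ.image Prod.snd)
          (s := s) (t := t) (by omega) (by omega) hlt
        omega
      · exact hlt
      · have := sort_getD_strictMono (Finset.Icc 1 n \ Γ.image Prod.snd)
          (s := t) (t := s) (by omega) (by omega) hlt
        omega
  · intro hPi
    have hdiag : ∀ p ∈ Γ, p.1 = p.2 := by
      intro p hp
      have := hPi hp
      simp only [simples, Finset.mem_image, Finset.mem_Icc] at this
      obtain ⟨t, _, rfl⟩ := this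
      rfl
    have hIJ : Γ.image Prod.fst = Γ.image Prod.snd := by
      ext a
      simp only [Finset.mem_image]
      constructor
      · rintro ⟨γ, hγ, rfl⟩; exact ⟨γ, hγ, (hdiag γ hγ).symm⟩
      · rintro ⟨γ, hγ, rfl⟩; exact ⟨γ, hγ, hdiag γ hγ⟩
    have hdiaginj : Function.Injective (fun a : ℕ => (a, a)) := by
      intro a b h
      exact congrArg Prod.fst h
    have hΓeq : Γ = (Γ.image Prod.snd).image (fun a => (a, a)) := by
      ext p
      simp only [Finset.mem_image]
      constructor
      · intro hp
        exact ⟨p.2, ⟨p, hp, rfl⟩, Prod.ext (hdiag p hp).symm rfl⟩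
      · rintro ⟨a, ⟨γ, hγ, rfl⟩, rfl⟩
        have : γ = (γ.2, γ.2) := Prod.ext (hdiag γ hγ) rfl
        rw [← this]; exact hγ
    rw [hdual, hIJ]
    have hres : simples n \ Γ = (Finset.Icc 1 n \ Γ.image Prod.snd).image (fun a => (a, a)) := by
      rw [Finset.image_sdiff _ _ hdiaginj, ← hΓeq]
      rfl
    rw [hres]
    ext x
    simp only [Finset.mem_image, Finset.mem_range]
    constructor
    · rintro ⟨t, ht, rfl⟩
      exact ⟨((Finset.Icc 1 n \ Γ.image Prod.snd).sort (· ≤ ·)).getD t 0,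
        mem_sort_getD _ ht, rfl⟩
    · rintro ⟨a, ha, rfl⟩
      have haL : a ∈ (Finset.Icc 1 n \ Γ.image Prod.snd).sort (· ≤ ·) :=
        (Finset.mem_sort (α := ℕ) (· ≤ ·)).mpr ha
      obtain ⟨t, ht, hat⟩ := List.mem_iff_getElem.mp haL
      refine ⟨t, ht, ?_⟩
      rw [List.getD_eq_getElem _ _ ht, hat]
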